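/- For every integer d ≥ 2, the function g_d(x) = (d+1)(x+1)e^{-x} + x(1-e^{-x})^{d+1} satisfies g_d(0) = d+1, and there exists a unique positive real c_d such that g_d(c_d) = d+1. -/

import Mathlib

open Real Set Filter Topology

noncomputable def hfun (d : ℕ) (x : ℝ) : ℝ :=
  x * (1 - Real.exp (-x)) ^ (d + 1) - ((d : ℝ) + 1) * (1 - (x + 1) * Real.exp (-x))

noncomputable def Dfun (d : ℕ) (x : ℝ) : ℝ :=
  (1 - Real.exp (-x)) ^ (d + 1)
    + x * (((d : ℝ) + 1) * (1 - Real.exp (-x)) ^ d * Real.exp (-x))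
    - ((d : ℝ) + 1) * (x * Real.exp (-x))

lemma hasDeriv_hfun (d : ℕ) (x : ℝ) : HasDerivAt (hfun d) (Dfun d x) x := by
  have he : HasDerivAt (fun y : ℝ => Real.exp (-y)) (-Real.exp (-x)) x := by
    simpa [Function.comp_def] using (Real.hasDerivAt_exp (-x)).comp x (hasDerivAt_neg x)
  have hu : HasDerivAt (fun y : ℝ => 1 - Real.exp (-y)) (Real.exp (-x)) x := by
    simpa [Pi.sub_def] using (hasDerivAt_const x (1:ℝ)).sub he
  have hp : HasDerivAt (fun y : ℝ => (1 - Real.exp (-y)) ^ (d+1))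
      ((d+1 : ℕ) * (1 - Real.exp (-x)) ^ d * Real.exp (-x)) x := by
    simpa [Pi.pow_def] using hu.pow (d+1)
  have h1 : HasDerivAt (fun y : ℝ => y * (1 - Real.exp (-y)) ^ (d+1))
      (1 * (1 - Real.exp (-x)) ^ (d+1) + x * ((d+1 : ℕ) * (1 - Real.exp (-x)) ^ d * Real.exp (-x))) x :=
    (hasDerivAt_id x).mul hp
  have h2i : HasDerivAt (fun y : ℝ => (y + 1) * Real.exp (-y))
      (1 * Real.exp (-x) + (x + 1) * (-Real.exp (-x))) x :=
    ((hasDerivAt_id x).add_const 1).mul he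
  have h2 : HasDerivAt (fun y : ℝ => ((d : ℝ) + 1) * (1 - (y + 1) * Real.exp (-y)))
      (((d : ℝ) + 1) * (0 - (1 * Real.exp (-x) + (x + 1) * (-Real.exp (-x))))) x :=
    ((hasDerivAt_const x (1:ℝ)).sub h2i).const_mul _
  have := h1.sub h2
  simp only [Pi.sub_def] at this
  refine this.congr_deriv ?_
  simp only [Dfun]
  push_cast
  ring

lemma cont_hfun (d : ℕ) : Continuous (hfun d) :=
  continuous_iff_continuousAt.mpr fun x => (hasDeriv_hfun d x).continuousAt

lemma keyK (x : ℝ) (hx : 0 < x) :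
    x ^ 2 * Real.exp (-x) * (1 - Real.exp (-x)) <
    (1 - (x + 1) * Real.exp (-x)) * ((1 - Real.exp (-x)) + 3 * x * Real.exp (-x)) := by
  have hcube : 1 + x + x ^ 2 / 2 + x ^ 3 / 6 ≤ Real.exp x := by
    have := Real.sum_le_exp_of_nonneg (le_of_lt hx) 4
    simp [Finset.sum_range_succ, Nat.factorial] at this
    linarith
  have ht0 : 0 < Real.exp (-x) := Real.exp_pos _
  have hts : Real.exp (-x) * Real.exp x = 1 := by
    rw [← Real.exp_add]; simp
  set t := Real.exp (-x) with htdef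
  set y := Real.exp x - 1 with hydef
  have hyq : x + x ^ 2 / 2 + x ^ 3 / 6 ≤ y := by
    simp only [hydef]; linarith
  have h1 : 1 - t = y * t := by
    simp only [hydef]; nlinarith [hts]
  have h2 : 1 - (x + 1) * t = (y - x) * t := by
    simp only [hydef]; nlinarith [hts]
  have key : x ^ 2 * y < (y - x) * (y + 3 * x) := by
    have hq0 : 0 ≤ y - (x + x ^ 2 / 2 + x ^ 3 / 6) := by linarith
    have hq1 : 0 ≤ y + (x + x ^ 2 / 2 + x ^ 3 / 6) + 2 * x - x ^ 2 := by nlinarith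
    nlinarith [mul_nonneg hq0 hq1, pow_pos hx 3, pow_pos hx 4, pow_pos hx 6]
  calc x ^ 2 * t * (1 - t) = x ^ 2 * y * t ^ 2 := by rw [h1]; ring
  _ < (y - x) * (y + 3 * x) * t ^ 2 := by
      have := mul_pos ht0 ht0
      nlinarith [key, sq_nonneg t]
  _ = (1 - (x + 1) * t) * ((1 - t) + 3 * x * t) := by rw [h1, h2]; ring

lemma claimC (d : ℕ) (hd : 2 ≤ d) (x : ℝ) (hx : 0 < x) (hh : 0 ≤ hfun d x) :
    0 < Dfun d x := by
  have hK := keyK x hx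
  have ht0 : 0 < Real.exp (-x) := Real.exp_pos _
  have ht1 : Real.exp (-x) < 1 := Real.exp_lt_one_iff.mpr (by linarith)
  set t := Real.exp (-x) with htdef
  set u := 1 - t with hudef
  have hu0 : 0 < u := by simp only [hudef]; linarith
  have hA : 0 < 1 - (x + 1) * t := by
    have h1 : x + 1 < Real.exp x := by
      have := Real.add_one_lt_exp (ne_of_gt hx); linarith
    have hts : t * Real.exp x = 1 := by rw [htdef, ← Real.exp_add]; simp
    nlinarith [Real.exp_pos x]
  have hd3 : (3 : ℝ) ≤ (d : ℝ) + 1 := by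
    have : (2 : ℝ) ≤ (d : ℝ) := by exact_mod_cast hd
    linarith
  set c := (d : ℝ) + 1 with hcdef
  have hc0 : 0 < c := by linarith
  set v := u ^ (d + 1) with hvdef
  set w := u ^ d with hwdef
  have hvw : u * w = v := by rw [hvdef, hwdef, pow_succ]; ring
  have hv0 : 0 < v := pow_pos hu0 _
  have hw0 : 0 < w := pow_pos hu0 _
  have hh' : c * (1 - (x + 1) * t) ≤ x * v := by
    have : hfun d x = x * v - c * (1 - (x + 1) * t) := by
      simp only [hfun, hvdef, hudef, hcdef, htdef]
    linarith [hh, this ▸ hh]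
  have hgoal : Dfun d x = v + x * (c * w * t) - c * (x * t) := by
    simp only [Dfun, hvdef, hwdef, hudef, hcdef, htdef]
  rw [hgoal]
  have hxu : 0 < x * u := mul_pos hx hu0
  have e1 : c * (1 - (x + 1) * t) * u ≤ x * v * u :=
    mul_le_mul_of_nonneg_right hh' hu0.le
  have e2 : (c * x * t) * (c * (1 - (x + 1) * t)) ≤ (c * x * t) * (x * v) :=
    mul_le_mul_of_nonneg_left hh' (by positivity)
  have e3 : 3 * (x * t * (1 - (x + 1) * t)) ≤ c * (x * t * (1 - (x + 1) * t)) :=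
    mul_le_mul_of_nonneg_right hd3 (by positivity)
  have main : 0 < (v + x * (c * w * t) - c * (x * t)) * (x * u) := by
    have expand : (v + x * (c * w * t) - c * (x * t)) * (x * u)
        = (x * v) * u + (c * x * t) * (x * (u * w)) - c * (x * t * (x * u)) := by ring
    rw [expand, hvw]
    have final : c * ((1 - (x + 1) * t) * (u + 3 * x * t))
        ≤ c * (1 - (x + 1) * t) * u + (c * x * t) * (c * (1 - (x + 1) * t)) := by
      nlinarith [mul_le_mul_of_nonneg_left e3 hc0.le]
    have hKc : c * (x ^ 2 * t * u) < c * ((1 - (x + 1) * t) * (u + 3 * x * t)) :=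
      mul_lt_mul_of_pos_left hK hc0
    nlinarith [e1, e2, final, hKc]
  by_contra hcon
  push_neg at hcon
  nlinarith [main, hxu]

lemma hfun_neg (d : ℕ) (hd : 2 ≤ d) : hfun d (1/4) < 0 := by
  have ht0 : 0 < Real.exp (-(1/4 : ℝ)) := Real.exp_pos _
  have ht1 : Real.exp (-(1/4 : ℝ)) < 1 := Real.exp_lt_one_iff.mpr (by norm_num)
  set t := Real.exp (-(1/4 : ℝ)) with htdef
  -- t ≤ 64/81
  have hq : (81 : ℝ) / 64 ≤ Real.exp (1/4 : ℝ) := by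
    have h8 : (1 : ℝ) + 1/8 ≤ Real.exp (1/8) := by
      have := Real.add_one_le_exp (1/8 : ℝ); linarith
    have hsq : Real.exp (1/8 : ℝ) * Real.exp (1/8 : ℝ) = Real.exp (1/4 : ℝ) := by
      rw [← Real.exp_add]; norm_num
    nlinarith [Real.exp_pos (1/8 : ℝ)]
  have hts : t * Real.exp (1/4 : ℝ) = 1 := by rw [htdef, ← Real.exp_add]; simp
  have htb : t ≤ 64/81 := by nlinarith [Real.exp_pos (1/4 : ℝ)]
  set u := 1 - t with hudef
  have hu0 : 0 < u := by simp only [hudef]; linarith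
  have hult : u < 1/4 := by
    have := Real.add_one_lt_exp (show (-(1/4) : ℝ) ≠ 0 by norm_num)
    simp only [hudef, htdef]; linarith
  have hupow : u ^ (d + 1) ≤ u ^ 3 :=
    pow_le_pow_of_le_one hu0.le (by simp only [hudef]; linarith) (by omega)
  have hucube : u ^ 3 ≤ (1/64 : ℝ) := by
    have := pow_le_pow_left₀ hu0.le hult.le 3
    norm_num at this
    linarith
  have hA : (1 : ℝ) / 81 ≤ 1 - (1/4 + 1) * t := by nlinarith
  have hd3 : (3 : ℝ) ≤ (d : ℝ) + 1 := by
    have : (2 : ℝ) ≤ (d : ℝ) := by exact_mod_cast hd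
    linarith
  have hcA : 3 * ((1:ℝ)/81) ≤ ((d:ℝ) + 1) * (1 - (1/4 + 1) * t) := by
    have := mul_le_mul hd3 hA (by norm_num) (by linarith)
    linarith
  simp only [hfun]
  rw [← htdef, ← hudef]
  clear_value t u
  nlinarith [hupow, hucube, hcA]

lemma hfun_pos (d : ℕ) (hd : 2 ≤ d) :
    0 < hfun d (((d : ℝ) + 1) * 2 ^ (d + 1) + 1) := by
  set b := ((d : ℝ) + 1) * 2 ^ (d + 1) + 1 with hbdef
  have hb1 : (1 : ℝ) ≤ b := by
    have : (0:ℝ) ≤ ((d : ℝ) + 1) * 2 ^ (d + 1) := by positivity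
    simp only [hbdef]; linarith
  have ht0 : 0 < Real.exp (-b) := Real.exp_pos _
  have hts : Real.exp (-b) * Real.exp b = 1 := by rw [← Real.exp_add]; simp
  have hexpb : (2 : ℝ) ≤ Real.exp b := by
    have := Real.add_one_le_exp b; linarith
  have htb : Real.exp (-b) ≤ 1/2 := by nlinarith
  set t := Real.exp (-b) with htdef
  set u := 1 - t with hudef
  have hu2 : (1/2 : ℝ) ≤ u := by simp only [hudef]; linarith
  have hupow : (1/2 : ℝ) ^ (d + 1) ≤ u ^ (d + 1) := pow_le_pow_left₀ (by norm_num) hu2 _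
  have hmain : ((d : ℝ) + 1) + (1/2 : ℝ) ^ (d + 1) ≤ b * u ^ (d + 1) := by
    have h1 : b * (1/2 : ℝ) ^ (d + 1) = ((d : ℝ) + 1) + (1/2 : ℝ) ^ (d + 1) := by
      have h2 : (2 : ℝ) ^ (d + 1) * (1/2 : ℝ) ^ (d + 1) = 1 := by
        rw [← mul_pow]; norm_num
      simp only [hbdef]; nlinarith [h2]
    have h3 : b * (1/2 : ℝ) ^ (d + 1) ≤ b * u ^ (d + 1) :=
      mul_le_mul_of_nonneg_left hupow (by linarith)
    linarith
  have hA : 1 - (b + 1) * t < 1 := by nlinarith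
  have hd0 : (0 : ℝ) < (d : ℝ) + 1 := by positivity
  simp only [hfun]
  rw [← htdef, ← hudef]
  have hApos : ((d:ℝ)+1) * (1 - (b + 1) * t) < ((d:ℝ)+1) * 1 :=
    mul_lt_mul_of_pos_left hA hd0
  have hp2 : (0:ℝ) < (1/2 : ℝ) ^ (d + 1) := by positivity
  nlinarith [hmain, hApos, hp2]

lemma no_two_roots (d : ℕ) (hd : 2 ≤ d) {a b : ℝ} (ha : 0 < a) (hab : a < b)
    (hha : hfun d a = 0) (hhb : hfun d b = 0) : False := by
  have hDa : 0 < Dfun d a := claimC d hd a ha (le_of_eq hha.symm)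
  -- slope of hfun at a tends to Dfun d a from the right; it is eventually positive
  have Hs : Filter.Tendsto (slope (hfun d) a) (𝓝[>] a) (𝓝 (Dfun d a)) :=
    (hasDerivAt_iff_tendsto_slope.mp (hasDeriv_hfun d a)).mono_left
      (nhdsWithin_mono a (fun y hy => Set.mem_compl_singleton_iff.mpr (ne_of_gt hy)))
  have hev : ∀ᶠ y in 𝓝[>] a, 0 < slope (hfun d) a y ∧ y ∈ Set.Ioo a b :=
    (Hs.eventually (eventually_gt_nhds hDa)).and
      (Filter.eventually_of_mem (Ioo_mem_nhdsGT_of_mem (Set.left_mem_Ico.mpr hab)) fun y hy => hy)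
  obtain ⟨a', ha's, ha'oo⟩ := hev.exists
  have ha'sub : 0 < a' - a := sub_pos.mpr ha'oo.1
  have ha'pos : 0 < hfun d a' := by
    rw [slope_def_field, hha, sub_zero] at ha's
    exact (div_pos_iff.mp ha's).resolve_right (fun h => absurd h.2 (by linarith)) |>.1
  -- the set of roots in [a', b]
  set S : Set ℝ := Set.Icc a' b ∩ {x | hfun d x = 0} with hSdef
  have hbS : b ∈ S := ⟨⟨le_of_lt ha'oo.2, le_refl b⟩, hhb⟩
  have hSbdd : BddBelow S := ⟨a', fun x hx => hx.1.1⟩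
  have hScl : IsClosed S :=
    isClosed_Icc.inter (isClosed_eq (cont_hfun d) continuous_const)
  set c := sInf S with hcdef
  have hcS : c ∈ S := hScl.csInf_mem ⟨b, hbS⟩ hSbdd
  have hc0 : hfun d c = 0 := hcS.2
  have ha'c : a' < c := by
    rcases lt_or_eq_of_le hcS.1.1 with h | h
    · exact h
    · exact absurd hc0 (by rw [← h]; exact ne_of_gt ha'pos)
  -- hfun is nonnegative on [a', c)
  have hnonneg : ∀ x ∈ Set.Ico a' c, 0 ≤ hfun d x := by
    intro x hx
    by_contra hneg
    push_neg at hneg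
    have hsub : Set.Icc (hfun d x) (hfun d a') ⊆ hfun d '' Set.Icc a' x :=
      intermediate_value_Icc' hx.1 (cont_hfun d).continuousOn
    obtain ⟨r, hr, hr0⟩ := hsub ⟨le_of_lt hneg, le_of_lt ha'pos⟩
    have hrS : r ∈ S := by
      refine ⟨⟨hr.1, ?_⟩, hr0⟩
      have : x < b := lt_of_lt_of_le hx.2 hcS.1.2
      linarith [hr.2]
    have := csInf_le hSbdd hrS
    have : r < c := lt_of_le_of_lt hr.2 hx.2
    linarith [csInf_le hSbdd hrS]
  -- the derivative at c is positive (claimC), but slope from the left is ≤ 0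
  have hcpos : 0 < c := lt_trans (lt_trans ha ha'oo.1) ha'c
  have hDc : 0 < Dfun d c := claimC d hd c hcpos (le_of_eq hc0.symm)
  have Hs2 : Filter.Tendsto (slope (hfun d) c) (𝓝[<] c) (𝓝 (Dfun d c)) :=
    (hasDerivAt_iff_tendsto_slope.mp (hasDeriv_hfun d c)).mono_left
      (nhdsWithin_mono c (fun y hy => Set.mem_compl_singleton_iff.mpr (ne_of_lt hy)))
  have hev2 : ∀ᶠ y in 𝓝[<] c, slope (hfun d) c y ≤ 0 := by
    refine Filter.eventually_of_mem (Ico_mem_nhdsLT_of_mem ⟨ha'c, le_refl c⟩) ?_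
    intro y hy
    rw [slope_def_field, hc0]
    exact div_nonpos_of_nonneg_of_nonpos (by linarith [hnonneg y hy]) (by linarith [hy.2])
  have : Dfun d c ≤ 0 := le_of_tendsto Hs2 hev2
  linarith


/-- For every integer `d ≥ 2`, the function
`g_d(x) = (d+1)(x+1)e^{-x} + x(1-e^{-x})^{d+1}` satisfies `g_d 0 = d+1`,
and there exists a unique positive real `c` with `g_d c = d+1`. -/
theorem stmt0 (d : ℕ) (hd : 2 ≤ d)
    (g : ℝ → ℝ)
    (hg : ∀ x : ℝ, g x =
      (d + 1) * (x + 1) * Real.exp (-x) + x * (1 - Real.exp (-x)) ^ (d + 1)) :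
    g 0 = d + 1 ∧ ∃! c : ℝ, 0 < c ∧ g c = d + 1 := by
  have hiff : ∀ x : ℝ, g x = d + 1 ↔ hfun d x = 0 := by
    intro x
    have hrel : hfun d x = g x - ((d : ℝ) + 1) := by
      rw [hg x]; simp only [hfun]; ring
    rw [hrel]
    constructor <;> intro h <;> linarith
  refine ⟨by rw [hg 0]; simp, ?_⟩
  set b := ((d : ℝ) + 1) * 2 ^ (d + 1) + 1 with hbdef
  have h14b : (1/4 : ℝ) ≤ b := by
    have : (0:ℝ) ≤ ((d : ℝ) + 1) * 2 ^ (d + 1) := by positivity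
    simp only [hbdef]; linarith
  have hsub : Set.Icc (hfun d (1/4)) (hfun d b) ⊆ hfun d '' Set.Icc (1/4) b :=
    intermediate_value_Icc h14b (cont_hfun d).continuousOn
  obtain ⟨c, hcmem, hceq⟩ := hsub ⟨(hfun_neg d hd).le, (hfun_pos d hd).le⟩
  have hcpos : 0 < c := by linarith [hcmem.1]
  refine ⟨c, ⟨hcpos, (hiff c).mpr hceq⟩, ?_⟩
  rintro y ⟨hy0, hyg⟩
  have hy := (hiff y).mp hyg
  by_contra hne
  rcases lt_or_gt_of_ne hne with h | h
  · exact no_two_roots d hd hy0 h hy hceq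
  · exact no_two_roots d hd hcpos h hceq hy
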